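/- A lower-triangular invertible infinite matrix $A$ is a $W$-Riordan array (i.e. $w_k^2 C_k^2 = w_{k-1}C_{k-1} w_{k+1}C_{k+1}$ for all $k\geq 1$) if and only if there exist formal power series $\alpha,\beta \in \mathbb{F}[[y]]$ with $\alpha$ invertible ($v(\alpha)=0$) and $v(\beta)=1$ such that $C_k(y) = \alpha(y)\beta(y)^k/w_k$ for every $k$. -/

import Mathlib

open Polynomial

/-- Membership in the group `L` of infinite lower triangular matrices with
nonzero diagonal entries. -/
def memL {F : Type*} [Field F] (A : ℕ → ℕ → F) : Prop :=
  (∀ n k, n < k → A n k = 0) ∧ (∀ n, A n n ≠ 0)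

/-- The `k`-th column generating series `C_k(y) = ∑ₙ a_{n,k} yⁿ / wₙ` of a
matrix `A` with respect to the weights `w`. -/
noncomputable def colSeries {F : Type*} [Field F] (w : ℕ → F) (A : ℕ → ℕ → F)
    (k : ℕ) : PowerSeries F :=
  PowerSeries.mk fun n => A n k / w n

lemma coeff_one_mul' {F : Type*} [Field F] (f g : PowerSeries F) :
    PowerSeries.coeff 1 (f * g) =
      PowerSeries.coeff 0 f * PowerSeries.coeff 1 g +
        PowerSeries.coeff 1 f * PowerSeries.coeff 0 g := by
  rw [PowerSeries.coeff_mul, Finset.Nat.sum_antidiagonal_eq_sum_range_succ_mk]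
  simp [Finset.sum_range_succ]

/-- A lower-triangular invertible matrix `A` satisfies the `W`-Riordan
condition `wₖ² Cₖ² = wₖ₋₁ Cₖ₋₁ ⬝ wₖ₊₁ Cₖ₊₁` for all `k ≥ 1` iff there are
power series `α` of valuation `0` and `β` of valuation `1` with
`Cₖ = α βᵏ / wₖ` for all `k`. -/
theorem stmt2 {F : Type*} [Field F] (w : ℕ → F) (hw0 : w 0 = 1)
    (hw : ∀ n, w n ≠ 0) (A : ℕ → ℕ → F) (hA : memL A) :
    (∀ k : ℕ, 1 ≤ k →
        (w k) ^ 2 • (colSeries w A k) ^ 2 =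
          (w (k - 1) * w (k + 1)) • (colSeries w A (k - 1) * colSeries w A (k + 1)))
    ↔ ∃ α β : PowerSeries F,
        PowerSeries.constantCoeff α ≠ 0 ∧
        PowerSeries.coeff 0 β = 0 ∧ PowerSeries.coeff 1 β ≠ 0 ∧
        ∀ k, colSeries w A k = (w k)⁻¹ • (α * β ^ k) := by
  obtain ⟨hlow, hdiag⟩ := hA
  constructor
  · intro h
    set C : ℕ → PowerSeries F := fun k => (w k) • colSeries w A k with hCdef
    have hmul : ∀ k : ℕ, 1 ≤ k → (C k) ^ 2 = C (k - 1) * C (k + 1) := by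
      intro k hk
      simp only [hCdef, _root_.smul_pow, smul_mul_smul_comm]
      exact h k hk
    have hc0 : PowerSeries.constantCoeff (C 0) = A 0 0 := by
      simp only [hCdef]
      rw [← PowerSeries.coeff_zero_eq_constantCoeff, map_smul]
      simp [colSeries, hw0]
    have hc0ne : PowerSeries.constantCoeff (C 0) ≠ 0 := by
      rw [hc0]; exact hdiag 0
    have hC0ne : C 0 ≠ 0 := fun h0 => hc0ne (by rw [h0]; simp)
    set β : PowerSeries F := C 1 * (C 0)⁻¹ with hβdef
    have hC0inv : C 0 * (C 0)⁻¹ = 1 := PowerSeries.mul_inv_cancel _ hc0ne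
    have hC1 : C 0 * β = C 1 := by
      calc C 0 * (C 1 * (C 0)⁻¹) = C 1 * (C 0 * (C 0)⁻¹) := by ring
        _ = C 1 := by rw [hC0inv, mul_one]
    have hcoeff1C1 : PowerSeries.coeff 1 (C 1) = A 1 1 := by
      simp only [hCdef]
      rw [map_smul]
      simp only [colSeries, PowerSeries.coeff_mk, smul_eq_mul]
      rw [mul_div_assoc']
      exact mul_div_cancel_left₀ _ (hw 1)
    have hC1ne : C 1 ≠ 0 := fun h1 => by
      rw [h1] at hcoeff1C1; simp at hcoeff1C1; exact hdiag 1 hcoeff1C1.symm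
    have hβne : β ≠ 0 := fun hb => hC1ne (by rw [← hC1, hb, mul_zero])
    have hβ0 : PowerSeries.coeff 0 β = 0 := by
      rw [hβdef, PowerSeries.coeff_zero_eq_constantCoeff, map_mul]
      have : PowerSeries.constantCoeff (C 1) = 0 := by
        simp only [hCdef]
        rw [← PowerSeries.coeff_zero_eq_constantCoeff, map_smul]
        simp [colSeries, hlow 0 1 one_pos]
      rw [this, zero_mul]
    have hβ1 : PowerSeries.coeff 1 β ≠ 0 := by
      intro hb1
      have := congrArg (PowerSeries.coeff 1) hC1
      rw [coeff_one_mul', hβ0, mul_zero, add_zero, hb1, mul_zero, hcoeff1C1] at this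
      exact hdiag 1 this.symm
    have key : ∀ k, C (k + 1) = C k * β ∧ C k ≠ 0 := by
      intro k
      induction k with
      | zero => exact ⟨by rw [← hC1], hC0ne⟩
      | succ n ih =>
        obtain ⟨h1, h2⟩ := ih
        have hn1 : C (n + 1) ≠ 0 := by rw [h1]; exact mul_ne_zero h2 hβne
        refine ⟨?_, hn1⟩
        have hrec := hmul (n + 1) (by omega)
        simp only [Nat.add_sub_cancel] at hrec
        have h3 : C n * (C (n + 1) * β) = C n * C (n + 2) := by
          calc C n * (C (n + 1) * β) = (C n * β) * C (n + 1) := by ring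
            _ = C (n + 1) * C (n + 1) := by rw [← h1]
            _ = C (n + 1) ^ 2 := (sq (C (n + 1))).symm
            _ = C n * C (n + 2) := hrec
        exact (mul_left_cancel₀ h2 h3).symm
    have hall : ∀ k, C k = C 0 * β ^ k := by
      intro k
      induction k with
      | zero => simp
      | succ n ih => rw [(key n).1, ih, pow_succ, mul_assoc]
    refine ⟨C 0, β, hc0ne, hβ0, hβ1, fun k => ?_⟩
    rw [← hall k, hCdef]
    exact (inv_smul_smul₀ (hw k) _).symm
  · rintro ⟨α, β, hα, hβ0, hβ1, hEq⟩ k hk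
    obtain ⟨m, rfl⟩ : ∃ m, k = m + 1 := ⟨k - 1, by omega⟩
    simp only [hEq, Nat.add_sub_cancel]
    rw [_root_.smul_pow, smul_smul, smul_mul_smul_comm, smul_smul]
    have e1 : w (m + 1) ^ 2 * ((w (m + 1))⁻¹) ^ 2 = 1 := by
      field_simp
      exact div_self (hw _)
    have e2 : w m * w (m + 1 + 1) * ((w m)⁻¹ * (w (m + 1 + 1))⁻¹) = 1 := by
      field_simp
      exact div_self (mul_ne_zero (hw _) (hw _))
    rw [e1, e2, one_smul, one_smul]
    ring
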